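/- For every positive integer n, the embedding dimension of S_n satisfies e(S_n) ≥ n. -/
import Mathlib


/-- The minimal generating set of a submonoid `M` of ℕ: the nonzero elements of
`M` that cannot be written as a sum of two nonzero elements of `M`. -/
def minGens (M : AddSubmonoid ℕ) : Set ℕ :=
  {x | x ∈ M ∧ x ≠ 0 ∧ ¬∃ y ∈ M, ∃ z ∈ M, y ≠ 0 ∧ z ≠ 0 ∧ x = y + z}

/-- The embedding dimension `e(M)`: the number of minimal generators of `M`. -/
noncomputable def edim (M : AddSubmonoid ℕ) : ℕ := (minGens M).ncard

/-- If `M` contains a nonzero element, its set of minimal generators is finite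
(at most one per residue class mod that element). -/
lemma minGens_finite (M : AddSubmonoid ℕ) (m : ℕ) (hm : m ∈ M) (hm0 : m ≠ 0) :
    (minGens M).Finite := by
  have key : ∀ x ∈ minGens M, ∀ y ∈ minGens M, x % m = y % m → x < y → False := by
    intro x hx y hy hxy hlt
    have hdvd : m ∣ y - x := (Nat.modEq_iff_dvd' hlt.le).mp hxy
    obtain ⟨t, ht⟩ := hdvd
    have hmem : y - x ∈ M := by
      have : t • m ∈ M := AddSubmonoid.nsmul_mem M hm t
      simpa [ht, smul_eq_mul, Nat.mul_comm] using this
    exact hy.2.2 ⟨x, hx.1, y - x, hmem, hx.2.1, by omega, by omega⟩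
  have hinj : Set.InjOn (· % m) (minGens M) := by
    intro x hx y hy hxy
    rcases lt_trichotomy x y with h | h | h
    · exact (key x hx y hy hxy h).elim
    · exact h
    · exact (key y hy x hx hxy.symm h).elim
  have himg : ((· % m) '' minGens M).Finite :=
    (Set.finite_Iio m).subset (by
      rintro _ ⟨x, _, rfl⟩
      exact Nat.mod_lt _ (Nat.pos_of_ne_zero hm0))
  exact Set.Finite.of_finite_image himg hinj

lemma key_ineq (u B C D : ℤ) (hu : 2 ≤ u) (hB : 1 ≤ B) (hC : 1 ≤ C) (hD : 1 ≤ D)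
    (hdu : D ≤ C * u - 1) :
    C * ((u * B) * B) - D < (u * B + 1) * (C * (u * B) - D) := by
  have hprod : 0 ≤ C * (B - 1) * (u - 1) :=
    mul_nonneg (mul_nonneg (by omega) (by omega)) (by omega)
  have hkey0 : C * B + D < C * u * B + C := by nlinarith [hprod]
  have huB : (0 : ℤ) < u * B := mul_pos (by omega) (by omega)
  have hmul := mul_lt_mul_of_pos_right hkey0 huB
  nlinarith [hmul]

theorem stmt_10 (a c d : ℕ) (ha : 2 ≤ a) (hc : 0 < c) (hd : 0 < d)
    (hdca : d < c * a) (hda : Nat.Coprime d a) (hdc : Nat.Coprime d c)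
    (S : ℕ → AddSubmonoid ℕ)
    (hS : ∀ n, S n = AddSubmonoid.closure {x | ∃ j : ℕ, x = c * a ^ (n + j) - d}) :
    ∀ n : ℕ, 0 < n → n ≤ edim (S n) := by
  intro n hn
  set G : Set ℕ := {x | ∃ j : ℕ, x = c * a ^ (n + j) - d} with hG
  have hSn : S n = AddSubmonoid.closure G := hS n
  set s : ℕ → ℕ := fun j => c * a ^ (n + j) - d with hs
  -- basic facts
  have hdlt : ∀ j, d < c * a ^ (n + j) := by
    intro j
    calc d < c * a := hdca
    _ ≤ c * a ^ (n + j) := by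
        have : a ≤ a ^ (n + j) := by
          calc a = a ^ 1 := (pow_one a).symm
          _ ≤ a ^ (n + j) := Nat.pow_le_pow_right (by omega) (by omega)
        exact Nat.mul_le_mul_left c this
  have hsadd : ∀ j, s j + d = c * a ^ (n + j) := by
    intro j; have := hdlt j; simp only [hs]; omega
  have hspos : ∀ j, 0 < s j := by
    intro j; have := hdlt j; simp only [hs]; omega
  have hsG : ∀ j, s j ∈ G := fun j => ⟨j, rfl⟩
  have hsmem : ∀ j, s j ∈ S n := fun j => hSn ▸ AddSubmonoid.subset_closure (hsG j)
  have hGge : ∀ g ∈ G, s 0 ≤ g := by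
    rintro g ⟨j, rfl⟩
    have h1 : c * a ^ (n + 0) ≤ c * a ^ (n + j) :=
      Nat.mul_le_mul_left c (Nat.pow_le_pow_right (by omega) (by omega))
    simp only [hs]; omega
  have hGdvd : ∀ g ∈ G, a ^ n ∣ g + d := by
    rintro g ⟨j, rfl⟩
    have h := hdlt j
    have heq : (c * a ^ (n + j) - d) + d = c * a ^ (n + j) := by omega
    rw [heq, pow_add]
    exact ⟨c * a ^ j, by ring⟩
  -- congruence for multiset sums of generators
  have hmulti : ∀ l : Multiset ℕ, (∀ g ∈ l, g ∈ G) →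
      a ^ n ∣ l.sum + Multiset.card l * d := by
    intro l
    induction l using Multiset.induction_on with
    | empty => intro _; simp
    | cons g l ih =>
        intro h
        have h1 := hGdvd g (h g (Multiset.mem_cons_self g l))
        have h2 := ih (fun x hx => h x (Multiset.mem_cons_of_mem hx))
        have heq : (g ::ₘ l).sum + Multiset.card (g ::ₘ l) * d
            = (g + d) + (l.sum + Multiset.card l * d) := by
          simp only [Multiset.sum_cons, Multiset.card_cons]; ring
        rw [heq]
        exact Nat.dvd_add h1 h2
  -- every nonzero element of S n is a sum of at least one generator
  have hrep : ∀ x ∈ S n, x ≠ 0 → ∃ l : Multiset ℕ,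
      (∀ g ∈ l, g ∈ G) ∧ l.sum = x ∧ 1 ≤ Multiset.card l := by
    intro x hx hx0
    rw [hSn] at hx
    obtain ⟨l, hl, hsum⟩ := AddSubmonoid.exists_multiset_of_mem_closure hx
    refine ⟨l, hl, hsum, ?_⟩
    by_contra hcard
    have h0 : Multiset.card l = 0 := by omega
    have : l = 0 := Multiset.card_eq_zero.mp h0
    apply hx0
    rw [← hsum, this]
    simp
  -- minimality of s j for j < n
  have hmin : ∀ j < n, s j ∈ minGens (S n) := by
    intro j hj
    refine ⟨hsmem j, (hspos j).ne', ?_⟩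
    rintro ⟨y, hy, z, hz, hy0, hz0, hyz⟩
    obtain ⟨l1, hl1, hsum1, hc1⟩ := hrep y hy hy0
    obtain ⟨l2, hl2, hsum2, hc2⟩ := hrep z hz hz0
    set l := l1 + l2 with hl
    have hlG : ∀ g ∈ l, g ∈ G := by
      intro g hg
      rcases Multiset.mem_add.mp hg with h | h
      · exact hl1 g h
      · exact hl2 g h
    have hlsum : l.sum = s j := by
      rw [hl, Multiset.sum_add, hsum1, hsum2]; omega
    set k := Multiset.card l with hk
    have hk2 : 2 ≤ k := by
      rw [hk, hl, Multiset.card_add]; omega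
    have hdvd1 : a ^ n ∣ s j + k * d := by
      have := hmulti l hlG
      rwa [hlsum] at this
    have hdvd2 : a ^ n ∣ s j + d := hGdvd _ (hsG j)
    have hsplit : k * d = d + (k - 1) * d := by
      rw [Nat.sub_mul, one_mul]
      have : d ≤ k * d := Nat.le_mul_of_pos_left d (by omega)
      omega
    have hdvd3 : a ^ n ∣ (k - 1) * d := by
      have h3 : s j + k * d = (s j + d) + (k - 1) * d := by omega
      rw [h3] at hdvd1
      exact (Nat.dvd_add_right hdvd2).mp hdvd1
    have hcop : Nat.Coprime (a ^ n) d := (hda.pow_right n).symm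
    have hdvdk : a ^ n ∣ k - 1 := hcop.dvd_of_dvd_mul_right hdvd3
    have hank : a ^ n + 1 ≤ k := by
      have h1 : 0 < k - 1 := by omega
      have := Nat.le_of_dvd h1 hdvdk
      omega
    -- lower bound: s j ≥ k * s 0
    have hlow : k * s 0 ≤ s j := by
      have := Multiset.card_nsmul_le_sum (s := l) (a := s 0)
        (fun x hx => hGge x (hlG x hx))
      rw [hlsum] at this
      simpa [hk, smul_eq_mul] using this
    -- upper bound: s j < (a^n + 1) * s 0 ; contradiction
    have hle : a ^ (n + j) ≤ a ^ n * a ^ (n - 1) := by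
      rw [← pow_add]
      exact Nat.pow_le_pow_right (by omega) (by omega)
    have key : (c : ℤ) * ((a : ℤ) ^ n * (a : ℤ) ^ (n - 1)) - d
        < ((a : ℤ) ^ n + 1) * ((c : ℤ) * (a : ℤ) ^ n - d) := by
      have hA : (a : ℤ) ^ n = (a : ℤ) * (a : ℤ) ^ (n - 1) := by
        conv_lhs => rw [show n = (n - 1) + 1 by omega]
        rw [pow_succ']
      rw [hA]
      refine key_ineq (a : ℤ) ((a : ℤ) ^ (n - 1)) c d ?_ ?_ ?_ ?_ ?_
      · exact_mod_cast ha
      · exact_mod_cast Nat.one_le_pow _ _ (by omega)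
      · exact_mod_cast hc
      · exact_mod_cast hd
      · have : (d : ℤ) < (c : ℤ) * (a : ℤ) := by exact_mod_cast hdca
        omega
    have hupper : s j < (a ^ n + 1) * s 0 := by
      have h0' : (s 0 : ℤ) + d = c * (a : ℤ) ^ n := by
        have := hsadd 0
        have h00 : s 0 + d = c * a ^ n := by simpa using this
        exact_mod_cast h00
      have hj'' : (s j : ℤ) + d = c * (a : ℤ) ^ (n + j) := by exact_mod_cast hsadd j
      have hle' : (c : ℤ) * (a : ℤ) ^ (n + j) ≤ c * ((a : ℤ) ^ n * (a : ℤ) ^ (n - 1)) := by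
        have h2 : c * a ^ (n + j) ≤ c * (a ^ n * a ^ (n - 1)) := Nat.mul_le_mul_left c hle
        exact_mod_cast h2
      have hs0eq : (c : ℤ) * (a : ℤ) ^ n - d = (s 0 : ℤ) := by omega
      rw [hs0eq] at key
      have hgoal : (s j : ℤ) < ((a : ℤ) ^ n + 1) * (s 0 : ℤ) := by linarith
      exact_mod_cast hgoal
    have : (a ^ n + 1) * s 0 ≤ k * s 0 := Nat.mul_le_mul_right _ hank
    omega
  -- assemble: n distinct minimal generators
  have hfin : (minGens (S n)).Finite :=
    minGens_finite (S n) (s 0) (hsmem 0) (hspos 0).ne'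
  have hsm : StrictMono s := by
    intro x y hxy
    have hax := hsadd x
    have hay := hsadd y
    have hp : a ^ (n + x) < a ^ (n + y) := Nat.pow_lt_pow_right (by omega) (by omega)
    have : c * a ^ (n + x) < c * a ^ (n + y) := mul_lt_mul_of_pos_left hp hc
    omega
  have hinj : Set.InjOn s (Set.Iio n) := fun x _ y _ h => hsm.injective h
  have hsub : s '' (Set.Iio n) ⊆ minGens (S n) := by
    rintro _ ⟨j, hj, rfl⟩
    exact hmin j hj
  have hIio : (Set.Iio n : Set ℕ) = ((Finset.range n : Finset ℕ) : Set ℕ) := by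
    ext x; simp
  calc n = (Set.Iio n).ncard := by
        rw [hIio, Set.ncard_coe_finset, Finset.card_range]
  _ = (s '' Set.Iio n).ncard := (Set.ncard_image_of_injOn hinj).symm
  _ ≤ (minGens (S n)).ncard := Set.ncard_le_ncard hsub hfin
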